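/- If R is a local ring that is uniquely bleached, then for every j ∈ J(R[[x]]) and u ∈ U(R[[x]]), the additive map f ↦ jf − fu on R[[x]] is injective. -/

import Mathlib

/-- `R` is bleached: for every `a` in the Jacobson radical and unit `b`,
the maps `x ↦ b*x - x*a` and `x ↦ a*x - x*b` are surjective. -/
def Bleached (R : Type*) [Ring R] : Prop :=
  ∀ a b : R, a ∈ (⊥ : Ideal R).jacobson → IsUnit b →
    Function.Surjective (fun x : R => b * x - x * a) ∧
      Function.Surjective (fun x : R => a * x - x * b)

/-- `R` is uniquely bleached: for every `a` in the Jacobson radical and unit `b`,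
the maps `x ↦ b*x - x*a` and `x ↦ a*x - x*b` are bijective. -/
def UniquelyBleached (R : Type*) [Ring R] : Prop :=
  ∀ a b : R, a ∈ (⊥ : Ideal R).jacobson → IsUnit b →
    Function.Bijective (fun x : R => b * x - x * a) ∧
      Function.Bijective (fun x : R => a * x - x * b)

/-- If a local ring `R` is uniquely bleached, then for every `j ∈ J(R[[x]])` and every
unit `u` of `R[[x]]`, the map `f ↦ j*f - f*u` on `R[[x]]` is injective. -/
theorem powerSeries_sub_injective {R : Type*} [Ring R] [IsLocalRing R]
    (h : UniquelyBleached R) (j u : PowerSeries R)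
    (hj : j ∈ (⊥ : Ideal (PowerSeries R)).jacobson) (hu : IsUnit u) :
    Function.Injective (fun f : PowerSeries R => j * f - f * u) := by
  set a := PowerSeries.constantCoeff j with ha_def
  set b := PowerSeries.constantCoeff u with hb_def
  have ha : a ∈ (⊥ : Ideal R).jacobson := by
    rw [Ideal.mem_jacobson_iff] at hj ⊢
    intro y
    obtain ⟨Z, hZ⟩ := hj (PowerSeries.C y)
    refine ⟨PowerSeries.constantCoeff Z, ?_⟩
    rw [Ideal.mem_bot] at hZ ⊢
    have := congrArg (PowerSeries.constantCoeff) hZ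
    simpa using this
  have hb : IsUnit b := PowerSeries.isUnit_constantCoeff u hu
  have hinj : Function.Injective (fun x : R => a * x - x * b) := ((h a b ha hb).2).1
  intro f g hfg
  simp only at hfg
  have hd : j * (f - g) - (f - g) * u = 0 := by
    have h0 : j * (f - g) - (f - g) * u = (j * f - f * u) - (j * g - g * u) := by
      noncomm_ring
    rw [h0, hfg, sub_self]
  set d := f - g with hd_def
  suffices hd0 : d = 0 by
    have := sub_eq_zero.mp hd0
    exact this
  ext n
  rw [map_zero]
  induction n using Nat.strong_induction_on with
  | _ n ih =>
    have hc : (PowerSeries.coeff n) (j * d) = (PowerSeries.coeff n) (d * u) := by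
      have := congrArg (PowerSeries.coeff n) hd
      rw [map_sub, map_zero, sub_eq_zero] at this
      exact this
    rw [PowerSeries.coeff_mul, PowerSeries.coeff_mul] at hc
    have e1 : (∑ p ∈ Finset.HasAntidiagonal.antidiagonal n,
        PowerSeries.coeff p.1 j * PowerSeries.coeff p.2 d) =
        a * PowerSeries.coeff n d := by
      rw [Finset.sum_eq_single (0, n)]
      · simp [ha_def, PowerSeries.coeff_zero_eq_constantCoeff]
      · intro p hp hne
        have hle : p.2 < n := by
          rcases lt_or_eq_of_le (Finset.HasAntidiagonal.antidiagonal.snd_le hp) with h' | h'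
          · exact h'
          · exfalso
            apply hne
            have h1 : p.1 = 0 := by
              have := Finset.HasAntidiagonal.mem_antidiagonal.mp hp
              omega
            exact Prod.ext h1 h'
        rw [ih p.2 hle, mul_zero]
      · intro hmem
        exact absurd (Finset.HasAntidiagonal.mem_antidiagonal.mpr (by simp)) hmem
    have e2 : (∑ p ∈ Finset.HasAntidiagonal.antidiagonal n,
        PowerSeries.coeff p.1 d * PowerSeries.coeff p.2 u) =
        PowerSeries.coeff n d * b := by
      rw [Finset.sum_eq_single (n, 0)]
      · simp [hb_def, PowerSeries.coeff_zero_eq_constantCoeff]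
      · intro p hp hne
        have hle : p.1 < n := by
          rcases lt_or_eq_of_le (Finset.HasAntidiagonal.antidiagonal.fst_le hp) with h' | h'
          · exact h'
          · exfalso
            apply hne
            have h2 : p.2 = 0 := by
              have := Finset.HasAntidiagonal.mem_antidiagonal.mp hp
              omega
            exact Prod.ext h' h2
        rw [ih p.1 hle, zero_mul]
      · intro hmem
        exact absurd (Finset.HasAntidiagonal.mem_antidiagonal.mpr (by simp)) hmem
    rw [e1, e2] at hc
    have : (fun x : R => a * x - x * b) (PowerSeries.coeff n d) =
        (fun x : R => a * x - x * b) 0 := by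
      simp [hc]
    exact hinj this
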